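/- For fixed v > 0, as μ → -∞ the Rayleigh-normal distribution function Z_v(μ) tends to 0, and as μ → +∞ it tends to 1; hence Z_v is a cumulative distribution function. -/

import Mathlib

noncomputable def normalPDF (μ v x : ℝ) : ℝ :=
  (Real.sqrt (2 * Real.pi * v))⁻¹ * Real.exp (-(x - μ)^2 / (2 * v))

noncomputable def normalCDF (μ v x : ℝ) : ℝ :=
  ∫ t in Set.Iio x, normalPDF μ v t

/-- The set of fidelities appearing in the definition of the Rayleigh-normal
distribution function: `A` runs over continuously differentiable monotone increasing
functions with `Φ ≤ A ≤ 1`. -/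
noncomputable def RNFidelities (μ v : ℝ) : Set ℝ :=
  {r | ∃ A : ℝ → ℝ, ContDiff ℝ 1 A ∧ Monotone A ∧
    (∀ x, normalCDF 0 1 x ≤ A x) ∧ (∀ x, A x ≤ 1) ∧
    r = ∫ x : ℝ, Real.sqrt (deriv A x * normalPDF μ v x)}

/-- The Rayleigh-normal distribution function `Z_v(μ)`. -/
noncomputable def RayleighNormal (v μ : ℝ) : ℝ :=
  1 - (sSup (RNFidelities μ v))^2

open MeasureTheory Filter Set Real Topology

namespace RNaux

variable {μ v c x : ℝ}

lemma pdf_eq (μ : ℝ) {v : ℝ} (hv : 0 ≤ v) :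
    normalPDF μ v = ProbabilityTheory.gaussianPDFReal μ ⟨v, hv⟩ := rfl

lemma pdf_cont (μ v : ℝ) : Continuous (normalPDF μ v) := by
  unfold normalPDF; fun_prop

lemma pdf_nonneg (hv : 0 < v) (μ x : ℝ) : 0 ≤ normalPDF μ v x := by
  rw [pdf_eq μ hv.le]; exact ProbabilityTheory.gaussianPDFReal_nonneg _ _ x

lemma pdf_pos (hv : 0 < v) (μ x : ℝ) : 0 < normalPDF μ v x := by
  rw [pdf_eq μ hv.le]
  exact ProbabilityTheory.gaussianPDFReal_pos _ _ x (by intro h; exact hv.ne' (congrArg Subtype.val h))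

lemma pdf_integrable (hv : 0 < v) (μ : ℝ) : Integrable (normalPDF μ v) := by
  rw [pdf_eq μ hv.le]; exact ProbabilityTheory.integrable_gaussianPDFReal _ _

lemma pdf_integral (hv : 0 < v) (μ : ℝ) : ∫ x, normalPDF μ v x = 1 := by
  rw [pdf_eq μ hv.le]
  exact ProbabilityTheory.integral_gaussianPDFReal_eq_one μ (by intro h; exact hv.ne' (congrArg Subtype.val h))

lemma cdf_eq_Iic (μ v c : ℝ) : normalCDF μ v c = ∫ x in Iic c, normalPDF μ v x :=
  setIntegral_congr_set Iio_ae_eq_Iic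

lemma cdf_nonneg (hv : 0 < v) (μ c : ℝ) : 0 ≤ normalCDF μ v c :=
  setIntegral_nonneg measurableSet_Iio fun x _ => pdf_nonneg hv μ x

lemma cdf_add_tail (hv : 0 < v) (μ c : ℝ) :
    normalCDF μ v c + ∫ x in Ioi c, normalPDF μ v x = 1 := by
  rw [cdf_eq_Iic, ← setIntegral_union (Iic_disjoint_Ioi le_rfl) measurableSet_Ioi
      ((pdf_integrable hv μ).integrableOn) ((pdf_integrable hv μ).integrableOn),
    Iic_union_Ioi, setIntegral_univ, pdf_integral hv μ]

lemma setint_pos (hv : 0 < v) (μ : ℝ) {s : Set ℝ} (hs : MeasurableSet s) (h : 0 < volume s) :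
    0 < ∫ x in s, normalPDF μ v x := by
  rw [setIntegral_pos_iff_support_of_nonneg_ae (ae_of_all _ fun x => pdf_nonneg hv μ x)
      ((pdf_integrable hv μ).integrableOn)]
  have hsup : Function.support (normalPDF μ v) = univ :=
    eq_univ_iff_forall.2 fun x => (pdf_pos hv μ x).ne'
  simpa [hsup]

lemma cdf_pos (hv : 0 < v) (μ c : ℝ) : 0 < normalCDF μ v c :=
  setint_pos hv μ measurableSet_Iio (by simp [Real.volume_Iio])

lemma cdf_lt_one (hv : 0 < v) (μ c : ℝ) : normalCDF μ v c < 1 := by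
  have h := cdf_add_tail hv μ c
  have h2 : 0 < ∫ x in Ioi c, normalPDF μ v x :=
    setint_pos hv μ measurableSet_Ioi (by simp [Real.volume_Ioi])
  linarith

lemma cdf_le_one (hv : 0 < v) (μ c : ℝ) : normalCDF μ v c ≤ 1 :=
  (cdf_lt_one hv μ c).le

lemma cdf_mono (hv : 0 < v) (μ : ℝ) : Monotone (normalCDF μ v) := by
  intro a b hab
  rw [cdf_eq_Iic, cdf_eq_Iic]
  exact setIntegral_mono_set ((pdf_integrable hv μ).integrableOn)
    (ae_of_all _ fun x => pdf_nonneg hv μ x) ((Iic_subset_Iic.2 hab).eventuallyLE)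

lemma hasDerivAt_cdf (hv : 0 < v) (μ x : ℝ) :
    HasDerivAt (normalCDF μ v) (normalPDF μ v x) x := by
  have key : ∀ y, normalCDF μ v y = normalCDF μ v 0 + ∫ t in (0:ℝ)..y, normalPDF μ v t := by
    intro y
    have h := intervalIntegral.integral_Iic_sub_Iic ((pdf_integrable hv μ).integrableOn)
      ((pdf_integrable hv μ).integrableOn) (a := 0) (b := y)
    rw [cdf_eq_Iic, cdf_eq_Iic]
    linarith
  have h2 : HasDerivAt (fun y => normalCDF μ v 0 + ∫ t in (0:ℝ)..y, normalPDF μ v t)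
      (normalPDF μ v x) x := by
    refine HasDerivAt.const_add _ ?_
    exact intervalIntegral.integral_hasDerivAt_right
      ((pdf_cont μ v).intervalIntegrable 0 x)
      ((pdf_cont μ v).stronglyMeasurableAtFilter _ _) (pdf_cont μ v).continuousAt
  exact h2.congr_of_eventuallyEq (Filter.EventuallyEq.of_eq (funext key))

lemma contDiff_cdf (hv : 0 < v) (μ : ℝ) : ContDiff ℝ 1 (normalCDF μ v) := by
  rw [contDiff_one_iff_deriv]
  constructor
  · exact fun x => (hasDerivAt_cdf hv μ x).differentiableAt
  · have : deriv (normalCDF μ v) = normalPDF μ v :=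
      funext fun x => (hasDerivAt_cdf hv μ x).deriv
    rw [this]; exact pdf_cont μ v

lemma cdf_tendsto_atTop (hv : 0 < v) (μ : ℝ) :
    Tendsto (normalCDF μ v) atTop (𝓝 1) := by
  have h := (aecover_Iic (μ := volume) (b := fun c : ℝ => c)
    tendsto_id).integral_tendsto_of_countably_generated (pdf_integrable hv μ)
  rw [pdf_integral hv μ] at h
  exact h.congr fun c => (cdf_eq_Iic μ v c).symm

lemma cdf_tendsto_atBot (hv : 0 < v) (μ : ℝ) :
    Tendsto (normalCDF μ v) atBot (𝓝 0) := by
  have h := (aecover_Ioi (μ := volume) (l := atBot) (a := fun c : ℝ => c)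
    tendsto_id).integral_tendsto_of_countably_generated (pdf_integrable hv μ)
  rw [pdf_integral hv μ] at h
  have h2 := tendsto_const_nhds (x := (1:ℝ)) (f := atBot).sub h
  have h3 : (fun c : ℝ => 1 - ∫ x in Ioi c, normalPDF μ v x) = normalCDF μ v := by
    funext c; have := cdf_add_tail hv μ c; linarith
  rw [h3] at h2
  simpa using h2

lemma pdf_translate (μ v x : ℝ) : normalPDF μ v x = normalPDF 0 v (x - μ) := by
  simp [normalPDF]

lemma cdf_translate (μ v c : ℝ) : normalCDF μ v c = normalCDF 0 v (c - μ) := by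
  unfold normalCDF
  have h := (measurePreserving_sub_right volume μ).setIntegral_preimage_emb
    (MeasurableEquiv.subRight μ).measurableEmbedding (normalPDF 0 v) (Iio (c - μ))
  have hpre : (fun x : ℝ => x - μ) ⁻¹' Iio (c - μ) = Iio c := by
    ext y; simp [sub_lt_sub_iff_right]
  rw [hpre] at h
  rw [← h]
  exact setIntegral_congr_fun measurableSet_Iio fun x _ => pdf_translate μ v x

lemma cdf_param_atBot (hv : 0 < v) (c : ℝ) :
    Tendsto (fun μ => normalCDF μ v c) atBot (𝓝 1) := by
  have h1 : Tendsto (fun μ : ℝ => c - μ) atBot atTop := by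
    simpa [sub_eq_add_neg] using
      tendsto_atTop_add_const_left atBot c (tendsto_neg_atBot_atTop)
  have := (cdf_tendsto_atTop hv 0).comp h1
  exact this.congr fun μ => (cdf_translate μ v c).symm

lemma cdf_param_atTop (hv : 0 < v) (c : ℝ) :
    Tendsto (fun μ => normalCDF μ v c) atTop (𝓝 0) := by
  have h1 : Tendsto (fun μ : ℝ => c - μ) atTop atBot := by
    simpa [sub_eq_add_neg] using
      tendsto_atBot_add_const_left atTop c (tendsto_neg_atTop_atBot)
  have := (cdf_tendsto_atBot hv 0).comp h1
  exact this.congr fun μ => (cdf_translate μ v c).symm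

end RNaux
namespace RNaux

lemma deriv_nonneg_of_monotone {A : ℝ → ℝ} (hmono : Monotone A)
    (hdiff : Differentiable ℝ A) (x : ℝ) : 0 ≤ deriv A x := by
  have h := hasDerivAt_iff_tendsto_slope.1 (hdiff x).hasDerivAt
  refine ge_of_tendsto h ?_
  filter_upwards [self_mem_nhdsWithin] with y hy
  rcases lt_or_gt_of_ne (hy : y ≠ x) with h' | h'
  · rw [slope_def_field]
    have h1 : A y - A x ≤ 0 := by simpa using hmono h'.le
    have h2 : y - x < 0 := by linarith
    exact div_nonneg_of_nonpos h1 h2.le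
  · rw [slope_def_field]
    apply div_nonneg
    · simpa using hmono h'.le
    · linarith

lemma sqrt_mul_le_aux {a b t : ℝ} (ha : 0 ≤ a) (hb : 0 ≤ b) (ht : 0 < t) :
    Real.sqrt (a * b) ≤ (t * a + b / t) / 2 := by
  have h1 : Real.sqrt (a * b) = Real.sqrt (t * a) * Real.sqrt (b / t) := by
    rw [← Real.sqrt_mul (by positivity)]
    congr 1
    field_simp
  rw [h1]
  nlinarith [Real.sq_sqrt (mul_nonneg ht.le ha), Real.sq_sqrt (div_nonneg hb ht.le),
    sq_nonneg (Real.sqrt (t * a) - Real.sqrt (b / t)), Real.sqrt_nonneg (t * a),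
    Real.sqrt_nonneg (b / t)]

section perA

variable {μ v : ℝ} {A : ℝ → ℝ}

structure AData (A : ℝ → ℝ) where
  lTop : ℝ
  lBot : ℝ
  hBot0 : 0 ≤ lBot
  hTop1 : lTop ≤ 1
  hle : ∀ x, lBot ≤ A x ∧ A x ≤ lTop
  htop : Filter.Tendsto A Filter.atTop (nhds lTop)
  hbot : Filter.Tendsto A Filter.atBot (nhds lBot)

lemma getAData (hmono : Monotone A) (hlow : ∀ x, (0:ℝ) ≤ A x) (hup : ∀ x, A x ≤ 1) :
    Nonempty (AData A) := by
  have hba : BddAbove (Set.range A) := ⟨1, by rintro _ ⟨x, rfl⟩; exact hup x⟩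
  have hbb : BddBelow (Set.range A) := ⟨0, by rintro _ ⟨x, rfl⟩; exact hlow x⟩
  refine ⟨⟨⨆ x, A x, ⨅ x, A x, ?_, ?_, fun x => ⟨?_, ?_⟩, ?_, ?_⟩⟩
  · exact le_ciInf hlow
  · exact ciSup_le hup
  · exact ciInf_le hbb x
  · exact le_ciSup hba x
  · exact tendsto_atTop_ciSup hmono hba
  · exact tendsto_atBot_ciInf hmono hbb

variable (hv : 0 < v) (hA : ContDiff ℝ 1 A) (hmono : Monotone A) (d : AData A)

include hA hmono d

lemma derivA_integrableOn_Ioi (c : ℝ) : IntegrableOn (deriv A) (Set.Ioi c) := by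
  refine integrableOn_Ioi_deriv_of_nonneg' (g' := deriv A)
    (fun x _ => ((hA.differentiable one_ne_zero) x).hasDerivAt)
    (fun x _ => deriv_nonneg_of_monotone hmono (hA.differentiable one_ne_zero) x) d.htop

lemma derivA_integral_Ioi (c : ℝ) : ∫ x in Set.Ioi c, deriv A x = d.lTop - A c :=
  MeasureTheory.integral_Ioi_of_hasDerivAt_of_tendsto'
    (fun x _ => ((hA.differentiable one_ne_zero) x).hasDerivAt)
    (derivA_integrableOn_Ioi hA hmono d c) d.htop

lemma derivA_integrableOn_Iic (c : ℝ) : IntegrableOn (deriv A) (Set.Iic c) := by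
  have hDc : Continuous (deriv A) := hA.continuous_deriv le_rfl
  refine MeasureTheory.integrableOn_Iic_of_intervalIntegral_norm_tendsto
    (A c - d.lBot) c (fun i : ℝ => ?_) (l := Filter.atBot) (a := fun i : ℝ => i)
    tendsto_id ?_
  · exact (hDc.integrableOn_Icc).mono_set Set.Ioc_subset_Icc_self
  · have key : ∀ a : ℝ, (∫ x in a..c, ‖deriv A x‖) = A c - A a := by
      intro a
      have h1 : (∫ x in a..c, ‖deriv A x‖) = ∫ x in a..c, deriv A x := by
        refine intervalIntegral.integral_congr fun y _ => ?_
        exact Real.norm_of_nonneg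
          (deriv_nonneg_of_monotone hmono (hA.differentiable one_ne_zero) y)
      rw [h1]
      exact intervalIntegral.integral_deriv_eq_sub
        (fun x _ => (hA.differentiable one_ne_zero) x)
        (hDc.intervalIntegrable a c)
    simp only [key]
    exact tendsto_const_nhds.sub d.hbot

lemma derivA_integral_Iic (c : ℝ) : ∫ x in Set.Iic c, deriv A x = A c - d.lBot :=
  MeasureTheory.integral_Iic_of_hasDerivAt_of_tendsto'
    (fun x _ => ((hA.differentiable one_ne_zero) x).hasDerivAt)
    (derivA_integrableOn_Iic hA hmono d c) d.hbot

lemma derivA_integrable : Integrable (deriv A) := by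
  have h : IntegrableOn (deriv A) (Set.Iic 0 ∪ Set.Ioi 0) :=
    (derivA_integrableOn_Iic hA hmono d 0).union (derivA_integrableOn_Ioi hA hmono d 0)
  rw [Set.Iic_union_Ioi] at h
  exact integrableOn_univ.1 h

lemma derivA_integral : ∫ x, deriv A x = d.lTop - d.lBot :=
  MeasureTheory.integral_of_hasDerivAt_of_tendsto
    (fun x => ((hA.differentiable one_ne_zero) x).hasDerivAt)
    (derivA_integrable hA hmono d) d.hbot d.htop

end perA

end RNaux
namespace RNaux

section bounds

variable {μ v : ℝ}

lemma integrable_sqrtDf (hv : 0 < v) {A : ℝ → ℝ} (hA : ContDiff ℝ 1 A) (hmono : Monotone A)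
    (d : AData A) :
    Integrable (fun x => Real.sqrt (deriv A x * normalPDF μ v x)) := by
  have hDc : Continuous (deriv A) := hA.continuous_deriv le_rfl
  have hcont : Continuous (fun x => Real.sqrt (deriv A x * normalPDF μ v x)) :=
    (hDc.mul (pdf_cont μ v)).sqrt
  refine Integrable.mono' (((derivA_integrable hA hmono d).add (pdf_integrable hv μ)).div_const 2)
    hcont.aestronglyMeasurable (ae_of_all _ fun x => ?_)
  rw [Real.norm_of_nonneg (Real.sqrt_nonneg _)]
  have := sqrt_mul_le_aux (deriv_nonneg_of_monotone hmono (hA.differentiable one_ne_zero) x)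
    (pdf_nonneg hv μ x) one_pos
  simpa using this

lemma setbound (hv : 0 < v) {A : ℝ → ℝ} (hA : ContDiff ℝ 1 A) (hmono : Monotone A)
    (d : AData A) {s : Set ℝ} {DB FB t : ℝ} (ht : 0 < t)
    (hDB : ∫ x in s, deriv A x ≤ DB) (hFB : ∫ x in s, normalPDF μ v x ≤ FB) :
    ∫ x in s, Real.sqrt (deriv A x * normalPDF μ v x) ≤ (t * DB + FB / t) / 2 := by
  have hDint : IntegrableOn (deriv A) s := (derivA_integrable hA hmono d).integrableOn
  have hfint : IntegrableOn (normalPDF μ v) s := (pdf_integrable hv μ).integrableOn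
  have h1 : ∫ x in s, Real.sqrt (deriv A x * normalPDF μ v x)
      ≤ ∫ x in s, (t * deriv A x + normalPDF μ v x / t) / 2 := by
    refine integral_mono ((integrable_sqrtDf hv hA hmono d).integrableOn)
      (((hDint.const_mul t).add (hfint.div_const t)).div_const 2) fun x => ?_
    exact sqrt_mul_le_aux (deriv_nonneg_of_monotone hmono (hA.differentiable one_ne_zero) x)
      (pdf_nonneg hv μ x) ht
  have h2 : ∫ x in s, (t * deriv A x + normalPDF μ v x / t) / 2
      = (t * (∫ x in s, deriv A x) + (∫ x in s, normalPDF μ v x) / t) / 2 := by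
    rw [integral_div, integral_add (hDint.const_mul t) (hfint.div_const t),
      integral_const_mul, integral_div]
  rw [h2] at h1
  refine h1.trans ?_
  gcongr

lemma mem_le_one (hv : 0 < v) {r : ℝ} (hr : r ∈ RNFidelities μ v) : r ≤ 1 := by
  obtain ⟨A, hA, hmono, hlow, hup, rfl⟩ := hr
  obtain ⟨d⟩ := getAData hmono (fun x => (cdf_nonneg one_pos 0 x).trans (hlow x)) hup
  have h1 : ∫ x, Real.sqrt (deriv A x * normalPDF μ v x)
      ≤ ∫ x, (deriv A x + normalPDF μ v x) / 2 := by
    refine integral_mono (integrable_sqrtDf hv hA hmono d)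
      (((derivA_integrable hA hmono d).add (pdf_integrable hv μ)).div_const 2) fun x => ?_
    have := sqrt_mul_le_aux (deriv_nonneg_of_monotone hmono (hA.differentiable one_ne_zero) x)
      (pdf_nonneg hv μ x) one_pos
    simpa using this
  have h2 : ∫ x, (deriv A x + normalPDF μ v x) / 2 = ((d.lTop - d.lBot) + 1) / 2 := by
    rw [integral_div, integral_add (derivA_integrable hA hmono d) (pdf_integrable hv μ),
      derivA_integral hA hmono d, pdf_integral hv μ]
  have h3 := d.hTop1
  have h4 := d.hBot0
  rw [h2] at h1
  linarith

lemma mem_le (hv : 0 < v) (c : ℝ) {r : ℝ} (hr : r ∈ RNFidelities μ v) :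
    r ≤ Real.sqrt (1 - normalCDF 0 1 c) + Real.sqrt (normalCDF μ v c) := by
  obtain ⟨A, hA, hmono, hlow, hup, rfl⟩ := hr
  obtain ⟨d⟩ := getAData hmono (fun x => (cdf_nonneg one_pos 0 x).trans (hlow x)) hup
  have hsplit : ∫ x, Real.sqrt (deriv A x * normalPDF μ v x)
      = (∫ x in Iic c, Real.sqrt (deriv A x * normalPDF μ v x))
        + ∫ x in Ioi c, Real.sqrt (deriv A x * normalPDF μ v x) := by
    rw [← setIntegral_union (Iic_disjoint_Ioi le_rfl) measurableSet_Ioi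
        ((integrable_sqrtDf hv hA hmono d).integrableOn)
        ((integrable_sqrtDf hv hA hmono d).integrableOn),
      Iic_union_Ioi, setIntegral_univ]
  rw [hsplit]
  have hFc : 0 < normalCDF μ v c := cdf_pos hv μ c
  have hΦc : normalCDF 0 1 c < 1 := cdf_lt_one one_pos 0 c
  have h1 : (∫ x in Iic c, Real.sqrt (deriv A x * normalPDF μ v x))
      ≤ Real.sqrt (normalCDF μ v c) := by
    have hb := setbound (μ := μ) hv hA hmono d (s := Iic c) (t := Real.sqrt (normalCDF μ v c))
      (DB := 1) (FB := normalCDF μ v c) (Real.sqrt_pos.2 hFc) ?_ ?_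
    · have hds : normalCDF μ v c / Real.sqrt (normalCDF μ v c) = Real.sqrt (normalCDF μ v c) :=
        Real.div_sqrt
      rw [hds, mul_one] at hb
      linarith
    · rw [derivA_integral_Iic hA hmono d c]
      have h5 := (d.hle c).2
      have h6 := d.hTop1
      have h7 := d.hBot0
      linarith
    · rw [← cdf_eq_Iic]
  have h2 : (∫ x in Ioi c, Real.sqrt (deriv A x * normalPDF μ v x))
      ≤ Real.sqrt (1 - normalCDF 0 1 c) := by
    have hu : 0 < Real.sqrt (1 - normalCDF 0 1 c) := Real.sqrt_pos.2 (by linarith)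
    have hb := setbound (μ := μ) hv hA hmono d (s := Ioi c) (t := (Real.sqrt (1 - normalCDF 0 1 c))⁻¹)
      (DB := 1 - normalCDF 0 1 c) (FB := 1) (by positivity) ?_ ?_
    · have he : (Real.sqrt (1 - normalCDF 0 1 c))⁻¹ * (1 - normalCDF 0 1 c)
          = Real.sqrt (1 - normalCDF 0 1 c) := by
        rw [inv_mul_eq_div, Real.div_sqrt]
      have he2 : (1:ℝ) / (Real.sqrt (1 - normalCDF 0 1 c))⁻¹ = Real.sqrt (1 - normalCDF 0 1 c) := by
        field_simp
      rw [he, he2] at hb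
      linarith
    · rw [derivA_integral_Ioi hA hmono d c]
      have h5 := (d.hle c).1
      have h6 := d.hTop1
      have h7 := hlow c
      have h8 := d.hBot0
      linarith
    · have h9 := cdf_add_tail hv μ c
      have h10 := cdf_nonneg hv μ c
      linarith
  linarith

lemma zero_mem (hv : 0 < v) (μ : ℝ) : (0:ℝ) ∈ RNFidelities μ v := by
  refine ⟨fun _ => 1, contDiff_const, monotone_const,
    fun x => cdf_le_one one_pos 0 x, fun _ => le_rfl, ?_⟩
  simp

lemma lower_mem (hv : 0 < v) (μ c : ℝ) :
    ∃ r ∈ RNFidelities μ v,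
      Real.sqrt (1 - normalCDF 0 1 c) * normalCDF μ v c ≤ r := by
  set A : ℝ → ℝ := fun x => 1 - (1 - normalCDF 0 1 x) * (1 - normalCDF μ v x) with hAdef
  have hΦ : ∀ x, 0 ≤ normalCDF 0 1 x ∧ normalCDF 0 1 x ≤ 1 :=
    fun x => ⟨cdf_nonneg one_pos 0 x, cdf_le_one one_pos 0 x⟩
  have hF : ∀ x, 0 ≤ normalCDF μ v x ∧ normalCDF μ v x ≤ 1 :=
    fun x => ⟨cdf_nonneg hv μ x, cdf_le_one hv μ x⟩
  have hAder : ∀ x, HasDerivAt A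
      (normalPDF 0 1 x * (1 - normalCDF μ v x) + normalPDF μ v x * (1 - normalCDF 0 1 x)) x := by
    intro x
    have h1 := hasDerivAt_cdf one_pos 0 x
    have h2 := hasDerivAt_cdf hv μ x
    have h3 := (hasDerivAt_const x (1:ℝ)).sub
      (((hasDerivAt_const x (1:ℝ)).sub h1).mul ((hasDerivAt_const x (1:ℝ)).sub h2))
    refine h3.congr_deriv ?_
    simp only [Pi.sub_apply]
    ring
  have hAdiff : Differentiable ℝ A := fun x => (hAder x).differentiableAt
  have hderiv : deriv A = fun x =>
      normalPDF 0 1 x * (1 - normalCDF μ v x) + normalPDF μ v x * (1 - normalCDF 0 1 x) :=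
    funext fun x => (hAder x).deriv
  have hDnn : ∀ x, 0 ≤ normalPDF 0 1 x * (1 - normalCDF μ v x)
      + normalPDF μ v x * (1 - normalCDF 0 1 x) := fun x =>
    add_nonneg (mul_nonneg (pdf_nonneg one_pos 0 x) (by linarith [(hF x).2]))
      (mul_nonneg (pdf_nonneg hv μ x) (by linarith [(hΦ x).2]))
  have hAC : ContDiff ℝ 1 A :=
    contDiff_const.sub ((contDiff_const.sub (contDiff_cdf one_pos 0)).mul
      (contDiff_const.sub (contDiff_cdf hv μ)))
  have hAm : Monotone A := by
    refine monotone_of_deriv_nonneg hAdiff fun x => ?_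
    rw [hderiv]
    exact hDnn x
  have hlow : ∀ x, normalCDF 0 1 x ≤ A x := fun x => by
    have h1 := (hΦ x).1; have h2 := (hΦ x).2
    have h3 := (hF x).1; have h4 := (hF x).2
    simp only [hAdef]
    nlinarith
  have hup : ∀ x, A x ≤ 1 := fun x => by
    have h1 := (hΦ x).1; have h2 := (hΦ x).2
    have h3 := (hF x).1; have h4 := (hF x).2
    simp only [hAdef]
    nlinarith
  refine ⟨_, ⟨A, hAC, hAm, hlow, hup, rfl⟩, ?_⟩
  obtain ⟨d⟩ := getAData hAm (fun x => (hΦ x).1.trans (hlow x)) hup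
  set g : ℝ → ℝ := fun x => normalPDF μ v x * Real.sqrt (1 - normalCDF 0 1 x) with hgdef
  have hgcont : Continuous g := (pdf_cont μ v).mul
    ((continuous_const.sub (contDiff_cdf one_pos 0).continuous).sqrt)
  have hgnn : ∀ x, 0 ≤ g x := fun x => mul_nonneg (pdf_nonneg hv μ x) (Real.sqrt_nonneg _)
  have hgint : Integrable g := by
    refine Integrable.mono' (pdf_integrable hv μ) hgcont.aestronglyMeasurable
      (ae_of_all _ fun x => ?_)
    rw [Real.norm_of_nonneg (hgnn x)]
    calc normalPDF μ v x * Real.sqrt (1 - normalCDF 0 1 x)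
        ≤ normalPDF μ v x * 1 := by
          refine mul_le_mul_of_nonneg_left ?_ (pdf_nonneg hv μ x)
          exact Real.sqrt_le_one.mpr (by linarith [(hΦ x).1])
      _ = normalPDF μ v x := mul_one _
  have step1 : ∫ x, g x ≤ ∫ x, Real.sqrt (deriv A x * normalPDF μ v x) := by
    refine integral_mono hgint (integrable_sqrtDf hv hAC hAm d) fun x => ?_
    have hfx := pdf_nonneg hv μ x
    have h1 : g x = Real.sqrt (normalPDF μ v x ^ 2 * (1 - normalCDF 0 1 x)) := by
      rw [hgdef]
      simp only []
      rw [Real.sqrt_mul (sq_nonneg _), Real.sqrt_sq hfx]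
    rw [h1]
    apply Real.sqrt_le_sqrt
    rw [(hAder x).deriv]
    have h2 := (hΦ x).2
    have h3 := (hF x).2
    have hφx := pdf_nonneg one_pos 0 x
    nlinarith [mul_nonneg (mul_nonneg hφx hfx) (by linarith [(hF x).2] : (0:ℝ) ≤ 1 - normalCDF μ v x)]
  have step2 : ∫ x in Iio c, g x ≤ ∫ x, g x :=
    setIntegral_le_integral hgint (ae_of_all _ hgnn)
  have step3 : Real.sqrt (1 - normalCDF 0 1 c) * normalCDF μ v c ≤ ∫ x in Iio c, g x := by
    have h1 : ∫ x in Iio c, normalPDF μ v x * Real.sqrt (1 - normalCDF 0 1 c)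
        ≤ ∫ x in Iio c, g x := by
      refine setIntegral_mono_on ((pdf_integrable hv μ).integrableOn.mul_const _)
        hgint.integrableOn measurableSet_Iio fun x hx => ?_
      refine mul_le_mul_of_nonneg_left ?_ (pdf_nonneg hv μ x)
      refine Real.sqrt_le_sqrt ?_
      have := cdf_mono one_pos 0 (le_of_lt hx)
      linarith
    have h2 : ∫ x in Iio c, normalPDF μ v x * Real.sqrt (1 - normalCDF 0 1 c)
        = Real.sqrt (1 - normalCDF 0 1 c) * normalCDF μ v c := by
      rw [integral_mul_const]
      rw [mul_comm]
      rfl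
    linarith
  linarith

end bounds

end RNaux
theorem stmt13 (v : ℝ) (hv : 0 < v) :
    Filter.Tendsto (fun μ => RayleighNormal v μ) Filter.atBot (nhds 0) ∧
    Filter.Tendsto (fun μ => RayleighNormal v μ) Filter.atTop (nhds 1) := by
  have hbdd : ∀ μ : ℝ, BddAbove (RNFidelities μ v) :=
    fun μ => ⟨1, fun r hr => RNaux.mem_le_one hv hr⟩
  have hne : ∀ μ : ℝ, (RNFidelities μ v).Nonempty := fun μ => ⟨0, RNaux.zero_mem hv μ⟩
  have hs0 : ∀ μ : ℝ, 0 ≤ sSup (RNFidelities μ v) :=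
    fun μ => le_csSup (hbdd μ) (RNaux.zero_mem hv μ)
  have hs1 : ∀ μ : ℝ, sSup (RNFidelities μ v) ≤ 1 :=
    fun μ => csSup_le (hne μ) fun r hr => RNaux.mem_le_one hv hr
  constructor
  · have hmain : Tendsto (fun μ => sSup (RNFidelities μ v)) atBot (𝓝 1) := by
      rw [tendsto_order]
      constructor
      · intro a ha
        have hsq : Tendsto (fun c => Real.sqrt (1 - normalCDF 0 1 c)) atBot (𝓝 1) := by
          have h := ((tendsto_const_nhds (x := (1:ℝ)) (f := atBot)).sub
            (RNaux.cdf_tendsto_atBot one_pos 0)).sqrt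
          simpa using h
        obtain ⟨c, hc⟩ := (hsq.eventually (eventually_gt_nhds ha)).exists
        have h2 : Tendsto (fun μ => Real.sqrt (1 - normalCDF 0 1 c) * normalCDF μ v c) atBot
            (𝓝 (Real.sqrt (1 - normalCDF 0 1 c))) := by
          have h := (RNaux.cdf_param_atBot hv c).const_mul (Real.sqrt (1 - normalCDF 0 1 c))
          simpa using h
        filter_upwards [h2.eventually (eventually_gt_nhds hc)] with μ hμ
        obtain ⟨r, hrmem, hrge⟩ := RNaux.lower_mem hv μ c
        exact lt_of_lt_of_le (lt_of_lt_of_le hμ hrge) (le_csSup (hbdd μ) hrmem)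
      · intro a ha
        filter_upwards with μ
        exact lt_of_le_of_lt (hs1 μ) ha
    have h : Tendsto (fun μ => RayleighNormal v μ) atBot (𝓝 (1 - 1^2)) := by
      unfold RayleighNormal
      exact tendsto_const_nhds.sub (hmain.pow 2)
    simpa using h
  · have hmain : Tendsto (fun μ => sSup (RNFidelities μ v)) atTop (𝓝 0) := by
      rw [tendsto_order]
      constructor
      · intro a ha
        filter_upwards with μ
        exact lt_of_lt_of_le ha (hs0 μ)
      · intro a ha
        have hsq : Tendsto (fun c => Real.sqrt (1 - normalCDF 0 1 c)) atTop (𝓝 0) := by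
          have h := ((tendsto_const_nhds (x := (1:ℝ)) (f := atTop)).sub
            (RNaux.cdf_tendsto_atTop one_pos 0)).sqrt
          simpa using h
        obtain ⟨c, hc⟩ := (hsq.eventually (eventually_lt_nhds (half_pos ha))).exists
        have h2 : Tendsto (fun μ => Real.sqrt (normalCDF μ v c)) atTop (𝓝 0) := by
          have h := (RNaux.cdf_param_atTop hv c).sqrt
          simpa using h
        filter_upwards [h2.eventually (eventually_lt_nhds (half_pos ha))] with μ hμ
        refine lt_of_le_of_lt (csSup_le (hne μ) fun r hr => RNaux.mem_le hv c hr) ?_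
        linarith
    have h : Tendsto (fun μ => RayleighNormal v μ) atTop (𝓝 (1 - 0^2)) := by
      unfold RayleighNormal
      exact tendsto_const_nhds.sub (hmain.pow 2)
    simpa using h
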